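/- Let (f_k)_{k∈ℕ} be a frame sequence in H with bounds A, B > 0 and synthesis operator T. Then for every c ∈ ℓ²(ℕ), A‖Qc‖² ≤ ‖Tc‖² ≤ B‖Qc‖². -/

import Mathlib

/- Setting: `H` is a complex Hilbert space, `ℓ2` is the Hilbert space of square-summable
complex sequences with standard orthonormal basis `lp.single 2 k 1`. -/

noncomputable section

abbrev ℓ2 : Type := lp (fun _ : ℕ => ℂ) 2

variable {H : Type} [NormedAddCommGroup H] [InnerProductSpace ℂ H] [CompleteSpace H]

/-- The closed linear span `V` of the set of values of the sequence `f`. -/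
def spanClosure (f : ℕ → H) : Submodule ℂ H :=
  (Submodule.span ℂ (Set.range f)).topologicalClosure

instance (f : ℕ → H) : CompleteSpace (spanClosure f) :=
  Submodule.topologicalClosure.completeSpace _

/-- `f` is a frame sequence with frame bounds `A`, `B`:  the frame inequality
`A‖g‖² ≤ ∑ₖ |⟨g, fₖ⟩|² ≤ B‖g‖²` holds for every `g` in the closed linear span `V` of the `fₖ`.
(In Mathlib's convention, the paper's `⟨g, fₖ⟩`, linear in the first argument, is `⟪fₖ, g⟫`.) -/
def IsFrameSeqWith (f : ℕ → H) (A B : ℝ) : Prop :=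
  0 < A ∧ 0 < B ∧
    ∀ g ∈ spanClosure f,
      Summable (fun k => ‖(inner ℂ (f k) g : ℂ)‖ ^ 2) ∧
      A * ‖g‖ ^ 2 ≤ ∑' k, ‖(inner ℂ (f k) g : ℂ)‖ ^ 2 ∧
      (∑' k, ‖(inner ℂ (f k) g : ℂ)‖ ^ 2) ≤ B * ‖g‖ ^ 2

/-- The orthogonal projection `Q` of `ℓ2` onto `(ker T)ᗮ`, as an operator `ℓ2 → ℓ2`. -/
def projQ (T : ℓ2 →L[ℂ] H) : ℓ2 →L[ℂ] ℓ2 :=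
  (LinearMap.ker (T : ℓ2 →ₗ[ℂ] H))ᗮ.subtypeL ∘L
    Submodule.orthogonalProjectionOnto (LinearMap.ker (T : ℓ2 →ₗ[ℂ] H))ᗮ

section Aux

set_option linter.unusedSectionVars false
set_option maxHeartbeats 1000000

lemma key_upper {B x y z : ℝ} (hB : 0 < B) (hx : 0 ≤ x) (hy : 0 ≤ y) (_hz : 0 ≤ z)
    (h1 : x ^ 2 ≤ y * z) (h2 : z ^ 2 ≤ B * x ^ 2) : x ^ 2 ≤ B * y ^ 2 := by
  rcases eq_or_lt_of_le hx with h | h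
  · nlinarith
  · have h3 := mul_self_le_mul_self (sq_nonneg x) h1
    have h4 := mul_le_mul_of_nonneg_left h2 (sq_nonneg y)
    have h5 : x ^ 2 * x ^ 2 ≤ (B * y ^ 2) * x ^ 2 := by nlinarith
    exact le_of_mul_le_mul_right h5 (by positivity)

lemma key_lower {A x y t : ℝ} (hA : 0 < A) (hx : 0 ≤ x) (_hy : 0 ≤ y) (_ht : 0 ≤ t)
    (hAg : A * y ^ 2 ≤ x ^ 2) (h1 : x ^ 2 ≤ y * t) : A * x ^ 2 ≤ t ^ 2 := by
  rcases eq_or_lt_of_le hx with h | h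
  · subst h; nlinarith [sq_nonneg t]
  · have h3 := mul_self_le_mul_self (sq_nonneg x) h1
    have h4 := mul_le_mul_of_nonneg_right hAg (sq_nonneg t)
    have h6 := mul_le_mul_of_nonneg_left h3 hA.le
    have h5 : (A * x ^ 2) * x ^ 2 ≤ t ^ 2 * x ^ 2 := by nlinarith
    exact le_of_mul_le_mul_right h5 (by positivity)

lemma T_single (f : ℕ → H) (T : ℓ2 →L[ℂ] H)
    (hT : ∀ c : ℓ2, HasSum (fun k => c k • f k) (T c)) (k : ℕ) :
    T (lp.single 2 k 1) = f k := by
  refine (hT (lp.single 2 k 1)).unique ?_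
  convert hasSum_ite_eq k (f k) using 2 with j
  by_cases hj : j = k
  · subst hj; simp [lp.single_apply_self]
  · simp [lp.single_apply_ne _ _ _ hj, hj]

lemma adjoint_coord (f : ℕ → H) (T : ℓ2 →L[ℂ] H)
    (hT : ∀ c : ℓ2, HasSum (fun k => c k • f k) (T c)) (g : H) (k : ℕ) :
    (ContinuousLinearMap.adjoint T g) k = inner ℂ (f k) g := by
  have h1 : (inner ℂ (lp.single 2 k (1:ℂ)) (ContinuousLinearMap.adjoint T g) : ℂ)
      = (ContinuousLinearMap.adjoint T g) k := by
    rw [lp.inner_single_left]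
    simp [RCLike.inner_apply]
  rw [← h1, ContinuousLinearMap.adjoint_inner_right, T_single f T hT]

lemma adjoint_norm_sq (f : ℕ → H) (T : ℓ2 →L[ℂ] H)
    (hT : ∀ c : ℓ2, HasSum (fun k => c k • f k) (T c)) (g : H) :
    ‖ContinuousLinearMap.adjoint T g‖ ^ 2 = ∑' k, ‖(inner ℂ (f k) g : ℂ)‖ ^ 2 := by
  have h := lp.norm_rpow_eq_tsum (p := 2) (by norm_num) (ContinuousLinearMap.adjoint T g)
  simp only [ENNReal.toReal_ofNat, Real.rpow_two] at h
  rw [h]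
  exact tsum_congr fun k => by rw [adjoint_coord f T hT]

lemma T_mem_spanClosure (f : ℕ → H) (T : ℓ2 →L[ℂ] H)
    (hT : ∀ c : ℓ2, HasSum (fun k => c k • f k) (T c)) (c : ℓ2) :
    T c ∈ spanClosure f := by
  have h := hT c
  refine (Submodule.isClosed_topologicalClosure _).mem_of_tendsto h ?_
  filter_upwards with s
  refine Submodule.sum_mem _ fun k _ => Submodule.smul_mem _ _ ?_
  exact Submodule.le_topologicalClosure _ (Submodule.subset_span (Set.mem_range_self k))

lemma ker_eq (T : ℓ2 →L[ℂ] H) :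
    LinearMap.ker (T : ℓ2 →ₗ[ℂ] H) = (LinearMap.range (ContinuousLinearMap.adjoint T : H →ₗ[ℂ] ℓ2))ᗮ := by
  ext c
  simp only [LinearMap.mem_ker, Submodule.mem_orthogonal, ContinuousLinearMap.coe_coe]
  constructor
  · rintro hc v ⟨g, rfl⟩
    rw [ContinuousLinearMap.coe_coe, ContinuousLinearMap.adjoint_inner_left, hc, inner_zero_right]
  · intro hc
    refine ext_inner_left ℂ fun v => ?_
    rw [inner_zero_right, ← ContinuousLinearMap.adjoint_inner_left]
    exact hc _ ⟨v, rfl⟩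

lemma ker_orth_eq (T : ℓ2 →L[ℂ] H) :
    (LinearMap.ker (T : ℓ2 →ₗ[ℂ] H))ᗮ
      = (LinearMap.range (ContinuousLinearMap.adjoint T : H →ₗ[ℂ] ℓ2)).topologicalClosure := by
  rw [ker_eq T, Submodule.orthogonal_orthogonal_eq_closure]

lemma upper_bound (f : ℕ → H) (A B : ℝ) (hF : IsFrameSeqWith f A B) (T : ℓ2 →L[ℂ] H)
    (hT : ∀ c : ℓ2, HasSum (fun k => c k • f k) (T c)) (c : ℓ2) :
    ‖T c‖ ^ 2 ≤ B * ‖c‖ ^ 2 := by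
  obtain ⟨hA, hB, hfr⟩ := hF
  obtain ⟨-, -, hub⟩ := hfr (T c) (T_mem_spanClosure f T hT c)
  have hadj : ‖ContinuousLinearMap.adjoint T (T c)‖ ^ 2 ≤ B * ‖T c‖ ^ 2 :=
    (adjoint_norm_sq f T hT (T c)) ▸ hub
  have h1 : ‖T c‖ ^ 2 ≤ ‖c‖ * ‖ContinuousLinearMap.adjoint T (T c)‖ := by
    have h0 : (‖T c‖ : ℝ) ^ 2 = RCLike.re (inner ℂ c (ContinuousLinearMap.adjoint T (T c)) : ℂ) := by
      rw [ContinuousLinearMap.adjoint_inner_right, ← @inner_self_eq_norm_sq ℂ]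
    rw [h0]
    calc RCLike.re (inner ℂ c (ContinuousLinearMap.adjoint T (T c)) : ℂ)
        ≤ ‖(inner ℂ c (ContinuousLinearMap.adjoint T (T c)) : ℂ)‖ := RCLike.re_le_norm _
      _ ≤ ‖c‖ * ‖ContinuousLinearMap.adjoint T (T c)‖ := norm_inner_le_norm _ _
  exact key_upper hB (norm_nonneg _) (norm_nonneg _) (norm_nonneg _) h1 hadj

lemma adjoint_proj (f : ℕ → H) (T : ℓ2 →L[ℂ] H)
    (hT : ∀ c : ℓ2, HasSum (fun k => c k • f k) (T c)) (g : H) :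
    ContinuousLinearMap.adjoint T g
      = ContinuousLinearMap.adjoint T (Submodule.orthogonalProjectionOnto (spanClosure f) g : H) := by
  have hmem : g - (Submodule.orthogonalProjectionOnto (spanClosure f) g : H) ∈ (spanClosure f)ᗮ :=
    Submodule.sub_starProjection_mem_orthogonal g
  have hco : ∀ k, (inner ℂ (f k) (g - (Submodule.orthogonalProjectionOnto (spanClosure f) g : H)) : ℂ) = 0 :=
    fun k => (Submodule.mem_orthogonal _ _).mp hmem (f k)
      (Submodule.le_topologicalClosure _ (Submodule.subset_span (Set.mem_range_self k)))
  have hz : ContinuousLinearMap.adjoint T (g - (Submodule.orthogonalProjectionOnto (spanClosure f) g : H)) = 0 := by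
    have hns : ‖ContinuousLinearMap.adjoint T (g - (Submodule.orthogonalProjectionOnto (spanClosure f) g : H))‖ ^ 2 = 0 := by
      rw [adjoint_norm_sq f T hT]
      calc ∑' k, ‖(inner ℂ (f k) (g - (Submodule.orthogonalProjectionOnto (spanClosure f) g : H)) : ℂ)‖ ^ 2
          = ∑' (_ : ℕ), (0:ℝ) := tsum_congr fun k => by rw [hco k]; simp
        _ = 0 := tsum_zero
    have := pow_eq_zero_iff (n := 2) (by norm_num) |>.mp hns
    simpa [norm_eq_zero] using this
  have hms := map_sub (ContinuousLinearMap.adjoint T) g (Submodule.orthogonalProjectionOnto (spanClosure f) g : H)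
  rw [hz] at hms
  exact sub_eq_zero.mp hms.symm

lemma lower_bound (f : ℕ → H) (A B : ℝ) (hF : IsFrameSeqWith f A B) (T : ℓ2 →L[ℂ] H)
    (hT : ∀ c : ℓ2, HasSum (fun k => c k • f k) (T c)) :
    ∀ c ∈ (LinearMap.ker (T : ℓ2 →ₗ[ℂ] H))ᗮ, A * ‖c‖ ^ 2 ≤ ‖T c‖ ^ 2 := by
  obtain ⟨hA, hB, hfr⟩ := hF
  have c1 : Continuous fun c : ℓ2 => A * ‖c‖ ^ 2 := continuous_const.mul (continuous_norm.pow 2)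
  have c2 : Continuous fun c : ℓ2 => ‖T c‖ ^ 2 := (T.continuous.norm).pow 2
  have hSclosed : IsClosed {c : ℓ2 | A * ‖c‖ ^ 2 ≤ ‖T c‖ ^ 2} := isClosed_le c1 c2
  have hrange : ∀ g : H, A * ‖ContinuousLinearMap.adjoint T g‖ ^ 2
      ≤ ‖T (ContinuousLinearMap.adjoint T g)‖ ^ 2 := by
    intro g₀
    rw [adjoint_proj f T hT g₀]
    generalize hgg : (Submodule.orthogonalProjectionOnto (spanClosure f) g₀ : H) = g
    have hgV : g ∈ spanClosure f := hgg ▸ (Submodule.orthogonalProjectionOnto (spanClosure f) g₀).2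
    obtain ⟨-, hlb, -⟩ := hfr g hgV
    have hAg : A * ‖g‖ ^ 2 ≤ ‖ContinuousLinearMap.adjoint T g‖ ^ 2 :=
      (adjoint_norm_sq f T hT g) ▸ hlb
    have h1 : ‖ContinuousLinearMap.adjoint T g‖ ^ 2
        ≤ ‖g‖ * ‖T (ContinuousLinearMap.adjoint T g)‖ := by
      have h0 : (‖ContinuousLinearMap.adjoint T g‖ : ℝ) ^ 2
          = RCLike.re (inner ℂ g (T (ContinuousLinearMap.adjoint T g)) : ℂ) := by
        rw [← ContinuousLinearMap.adjoint_inner_left, ← @inner_self_eq_norm_sq ℂ]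
      rw [h0]
      calc RCLike.re (inner ℂ g (T (ContinuousLinearMap.adjoint T g)) : ℂ)
          ≤ ‖(inner ℂ g (T (ContinuousLinearMap.adjoint T g)) : ℂ)‖ := RCLike.re_le_norm _
        _ ≤ ‖g‖ * ‖T (ContinuousLinearMap.adjoint T g)‖ := norm_inner_le_norm _ _
    exact key_lower hA (norm_nonneg _) (norm_nonneg _) (norm_nonneg _) hAg h1
  intro c hc
  have hmem : c ∈ closure ((LinearMap.range (ContinuousLinearMap.adjoint T : H →ₗ[ℂ] ℓ2) : Submodule ℂ ℓ2) : Set ℓ2) := by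
    rw [← Submodule.topologicalClosure_coe, ← ker_orth_eq T]
    exact hc
  have hsub : ((LinearMap.range (ContinuousLinearMap.adjoint T : H →ₗ[ℂ] ℓ2) : Submodule ℂ ℓ2) : Set ℓ2)
      ⊆ {c : ℓ2 | A * ‖c‖ ^ 2 ≤ ‖T c‖ ^ 2} := by
    rintro x ⟨g, rfl⟩
    exact hrange g
  exact closure_minimal hsub hSclosed hmem

end Aux

/-- for a frame sequence with bounds `A, B`, synthesis operator `T` and the
orthogonal projection `Q` onto `(ker T)ᗮ`: `A‖Qc‖² ≤ ‖Tc‖² ≤ B‖Qc‖²` for all `c ∈ ℓ²`. -/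
theorem stmt4 (f : ℕ → H) (A B : ℝ) (hF : IsFrameSeqWith f A B)
    (T : ℓ2 →L[ℂ] H) (hT : ∀ c : ℓ2, HasSum (fun k => c k • f k) (T c))
    (c : ℓ2) :
    A * ‖projQ T c‖ ^ 2 ≤ ‖T c‖ ^ 2 ∧ ‖T c‖ ^ 2 ≤ B * ‖projQ T c‖ ^ 2 := by
  have hQmem : projQ T c ∈ (LinearMap.ker (T : ℓ2 →ₗ[ℂ] H))ᗮ := by
    simp only [projQ, ContinuousLinearMap.comp_apply, Submodule.subtypeL_apply]
    exact (Submodule.orthogonalProjectionOnto (LinearMap.ker (T : ℓ2 →ₗ[ℂ] H))ᗮ c).2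
  have hTQ : T (projQ T c) = T c := by
    have hsub : c - projQ T c ∈ ((LinearMap.ker (T : ℓ2 →ₗ[ℂ] H))ᗮ)ᗮ := by
      exact Submodule.sub_starProjection_mem_orthogonal (K := (LinearMap.ker (T : ℓ2 →ₗ[ℂ] H))ᗮ) c
    rw [Submodule.orthogonal_orthogonal_eq_closure,
      (ContinuousLinearMap.isClosed_ker T).submodule_topologicalClosure_eq] at hsub
    have h0 : T (c - projQ T c) = 0 := hsub
    rw [map_sub] at h0
    exact (sub_eq_zero.mp h0).symm
  constructor
  · rw [← hTQ]
    exact lower_bound f A B hF T hT _ hQmem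
  · rw [← hTQ]
    exact upper_bound f A B hF T hT (projQ T c)

end
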